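/- arXiv:1904.08855 — 3 statements merged into one kernel-verified Lean document; each statement's English description precedes it below -/
import Mathlib

section
/- Suppose S ≠ 0 (so that ξ > 0), and suppose γ + 2ξη < 1 and ξ − η ≤ 1. Then every power flow solution v (i.e., v with all components nonzero and v = F(v)) that satisfies |v_i − 1| < r̄·|v_i| for all i = 1,…,n must in fact satisfy |v_i − (1 − η_i)| ≤ r̲·ξ_i for all i. In other words, there are no power flow solutions in the set {v : v_i ≠ 0 and |(v_i − 1)/v_i| < r̄ for all i} outside the closed polydisc {v : |v_i − (1 − η_i)| ≤ r̲·ξ_i for all i}. -/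
open Complex

/-- `η_i := Σ_j Ẑ_{ij} · conj(S_j)` -/
noncomputable def etaI {n : ℕ} (Z : Matrix (Fin n) (Fin n) ℂ) (S : Fin n → ℂ) (i : Fin n) : ℂ :=
  ∑ j, Z i j * (starRingEnd ℂ) (S j)

/-- `ξ_i := Σ_j |Ẑ_{ij} · S_j|` -/
noncomputable def xiI {n : ℕ} (Z : Matrix (Fin n) (Fin n) ℂ) (S : Fin n → ℂ) (i : Fin n) : ℝ :=
  ∑ j, ‖Z i j * S j‖

/-- `γ_i := 2(ξ_i + Re η_i) − ξ_i² − |η_i|²` -/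
noncomputable def gammaI {n : ℕ} (Z : Matrix (Fin n) (Fin n) ℂ) (S : Fin n → ℂ) (i : Fin n) : ℝ :=
  2 * (xiI Z S i + (etaI Z S i).re) - (xiI Z S i) ^ 2 - ‖etaI Z S i‖ ^ 2

/-- `η := max_i |η_i|` -/
noncomputable def etaMax {n : ℕ} (Z : Matrix (Fin n) (Fin n) ℂ) (S : Fin n → ℂ) : ℝ :=
  ⨆ i, ‖etaI Z S i‖

/-- `ξ := max_i ξ_i` -/
noncomputable def xiMax {n : ℕ} (Z : Matrix (Fin n) (Fin n) ℂ) (S : Fin n → ℂ) : ℝ :=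
  ⨆ i, xiI Z S i

/-- `γ := max_i γ_i` -/
noncomputable def gammaMax {n : ℕ} (Z : Matrix (Fin n) (Fin n) ℂ) (S : Fin n → ℂ) : ℝ :=
  ⨆ i, gammaI Z S i

/-- `r̲ := sqrt((1−γ − sqrt((1−γ)² − 4ξ²η²))/(2ξ²))` -/
noncomputable def rLow {n : ℕ} (Z : Matrix (Fin n) (Fin n) ℂ) (S : Fin n → ℂ) : ℝ :=
  Real.sqrt ((1 - gammaMax Z S -
      Real.sqrt ((1 - gammaMax Z S) ^ 2 - 4 * (xiMax Z S) ^ 2 * (etaMax Z S) ^ 2)) /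
    (2 * (xiMax Z S) ^ 2))

/-- `r̄ := sqrt((1−γ + sqrt((1−γ)² − 4ξ²η²))/(2ξ²))` -/
noncomputable def rHigh {n : ℕ} (Z : Matrix (Fin n) (Fin n) ℂ) (S : Fin n → ℂ) : ℝ :=
  Real.sqrt ((1 - gammaMax Z S +
      Real.sqrt ((1 - gammaMax Z S) ^ 2 - 4 * (xiMax Z S) ^ 2 * (etaMax Z S) ^ 2)) /
    (2 * (xiMax Z S) ^ 2))

/-- the fixed point power flow map `F(v)_i := 1 − Σ_j Ẑ_{ij}·conj(S_j)/conj(v_j)` -/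
noncomputable def pfMap {n : ℕ} (Z : Matrix (Fin n) (Fin n) ℂ) (S : Fin n → ℂ)
    (v : Fin n → ℂ) : Fin n → ℂ :=
  fun i => 1 - ∑ j, Z i j * (starRingEnd ℂ) (S j) / (starRingEnd ℂ) (v j)

set_option maxHeartbeats 1600000

private -- Lemma A: gap lemma
lemma lemA (ξ η γ x : ℝ) (hξ : 0 ≤ ξ) (hx : 0 ≤ x)
    (hG : ξ^2*x^2 - (1-γ)*x + η^2 < 0)
    (hγ : 1 - γ ≤ (1-ξ)^2 + η^2 + 2*η)
    (h2 : ξ - η ≤ 1) : ξ*(1-x) ≤ 1 := by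
  by_contra hcon
  push_neg at hcon
  have hx1 : x < 1 := by nlinarith
  have he : 0 < ξ - 1 - ξ*x := by nlinarith
  have hδ : 0 ≤ 1 + η - ξ := by linarith
  nlinarith [sq_nonneg (η - ξ*x), mul_nonneg hδ he.le, sq_nonneg (1+η-ξ), mul_nonneg (mul_nonneg hδ hδ) hx]

private lemma core (η q : ℂ) (a ξi : ℝ) (hξi : 0 ≤ ξi) (ha : 0 ≤ a)
    (heq : ‖q‖ = a * ‖1 - q‖)
    (hs : ‖η - q‖ ≤ ξi * a)
    (hm : ξi * (1 - a^2) ≤ 1)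
    (hG : ξi^2*(a^2)^2 - (1 - (2*(ξi + η.re) - ξi^2 - (‖η‖)^2))*a^2
        + (‖η‖)^2 < 0) :
    False := by
  set A := a^2 with hA
  have hq : Complex.normSq q = A * Complex.normSq (1 - q) := by
    have h := congrArg (·^2) heq
    simp only [mul_pow, Complex.sq_norm] at h
    exact h
  have hq' : q.re^2 + q.im^2 = A*((1-q.re)^2 + q.im^2) := by
    have h := hq
    simp only [Complex.normSq_apply, Complex.sub_re, Complex.sub_im, Complex.one_re,
      Complex.one_im] at h
    ring_nf at h ⊢
    linarith
  set ρ := η.re with hρ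
  set N2 := Complex.normSq η with hN2
  have hN2' : N2 = ρ^2 + η.im^2 := by
    rw [hN2, Complex.normSq_apply, hρ]; ring
  set s := ‖η - q‖ with hsdef
  set m := 1 - ξi*(1-A) with hmdef
  set Gi := ξi^2*A^2 - (1 - (2*(ξi + ρ) - ξi^2 - N2))*A + N2 with hGidef
  have hGi : Gi < 0 := by
    rw [hGidef, hN2, ← Complex.sq_norm η]; exact hG
  have hs0 : (0:ℝ) ≤ s := norm_nonneg _
  have hs2 : s^2 = (η.re - q.re)^2 + (η.im - q.im)^2 := by
    rw [hsdef, Complex.sq_norm, Complex.normSq_apply, Complex.sub_re, Complex.sub_im]; ring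
  rcases le_or_gt A 1 with hA1 | hA1
  · -- case A ≤ 1
    have hm0 : 0 ≤ m := by rw [hmdef]; linarith
    set W := ‖(A:ℂ) + (1-(A:ℂ)) * (starRingEnd ℂ) η‖ with hWdef
    have hW0 : (0:ℝ) ≤ W := norm_nonneg _
    have hW2 : W^2 = (a*m)^2 + (1-A)*Gi := by
      rw [hWdef, Complex.sq_norm, hGidef, hmdef, hN2', hA]
      simp only [Complex.normSq_apply, Complex.add_re, Complex.add_im, Complex.mul_re,
        Complex.mul_im, Complex.sub_re, Complex.sub_im, Complex.one_re, Complex.one_im,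
        Complex.ofReal_re, Complex.ofReal_im, Complex.conj_re, Complex.conj_im, hρ]
      ring
    have ham : 0 ≤ a * m := mul_nonneg ha hm0
    have hWam : W ≤ a * m := by nlinarith [hW2, hW0, ham, mul_nonneg (mul_nonneg ha hm0) hW0]
    have key : 2 * ((((A:ℂ) + (1-(A:ℂ)) * (starRingEnd ℂ) η)*(η - q)).re)
        = N2 - A*(1 - 2*ρ + N2) + (1-A)*s^2 := by
      rw [hs2, hN2', hρ]
      simp only [Complex.mul_re, Complex.add_re, Complex.add_im, Complex.sub_re,
        Complex.sub_im, Complex.one_re, Complex.one_im, Complex.ofReal_re,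
        Complex.ofReal_im, Complex.mul_im, Complex.conj_re, Complex.conj_im]
      linear_combination (-1 : ℝ)*hq'
    have hre : -(W*s) ≤ (((A:ℂ) + (1-(A:ℂ)) * (starRingEnd ℂ) η)*(η - q)).re := by
      have h1 := Complex.abs_re_le_norm ((((A:ℂ) + (1-(A:ℂ)) * (starRingEnd ℂ) η))*(η - q))
      rw [norm_mul] at h1
      have := (abs_le.mp h1).1
      rwa [← hWdef, ← hsdef] at this
    have e1 : W*s ≤ (a*m)*(ξi*a) := mul_le_mul hWam hs hs0 ham
    have e2 : (1-A)*s^2 ≤ (1-A)*(ξi*a)^2 := by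
      apply mul_le_mul_of_nonneg_left _ (by linarith)
      nlinarith [hs, hs0]
    have ering : N2 - A*(1 - 2*ρ + N2) + (1-A)*(ξi*a)^2 + 2*((a*m)*(ξi*a)) = Gi := by
      rw [hGidef, hmdef, hA]; ring
    linarith [key, hre]
  · -- case A > 1
    have hq2 : Complex.normSq (((A:ℂ)-1)*q - (A:ℂ)) = A := by
      simp only [Complex.normSq_apply, Complex.mul_re, Complex.mul_im, Complex.sub_re,
        Complex.sub_im, Complex.one_re, Complex.one_im, Complex.ofReal_re, Complex.ofReal_im]
      linear_combination (1-A)*hq'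
    set W := ‖((A:ℂ)-1)*η - (A:ℂ)‖ with hWdef
    have hW0 : (0:ℝ) ≤ W := norm_nonneg _
    have hW2 : W^2 = (a*m)^2 + (1-A)*Gi := by
      rw [hWdef, Complex.sq_norm, hGidef, hmdef, hN2', hA]
      simp only [Complex.normSq_apply, Complex.mul_re, Complex.mul_im, Complex.sub_re,
        Complex.sub_im, Complex.one_re, Complex.one_im, Complex.ofReal_re,
        Complex.ofReal_im, hρ]
      ring
    have hm1 : (1:ℝ) ≤ m := by rw [hmdef]; nlinarith
    have ham : 0 ≤ a * m := mul_nonneg ha (by linarith)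
    have hWam : a * m < W := by nlinarith [hW2, hW0, ham]
    have htri : W ≤ ‖((A:ℂ)-1)*q - (A:ℂ)‖ + (A-1)*s := by
      have h3 : ‖((A:ℂ)-1)*(η - q)‖ = (A-1)*s := by
        rw [norm_mul, hsdef]
        congr 1
        rw [show ((A:ℂ)-1) = ((A-1:ℝ):ℂ) by push_cast; ring, Complex.norm_real]
        exact abs_of_nonneg (by linarith)
      calc W = ‖(((A:ℂ)-1)*q - (A:ℂ)) + ((A:ℂ)-1)*(η - q)‖ := by
            rw [hWdef]; congr 1; ring
        _ ≤ _ := by rw [← h3]; exact norm_add_le _ _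
    have habs : a < ‖((A:ℂ)-1)*q - (A:ℂ)‖ := by
      have h4 : (A-1)*s ≤ (A-1)*(ξi*a) := mul_le_mul_of_nonneg_left hs (by linarith)
      have h5 : a*m - (A-1)*(ξi*a) = a := by rw [hmdef]; ring
      linarith
    have hfin : A < Complex.normSq (((A:ℂ)-1)*q - (A:ℂ)) := by
      rw [← Complex.sq_norm]
      nlinarith [norm_nonneg (((A:ℂ)-1)*q - (A:ℂ)), habs, ha]
    linarith [hq2, hfin]

/-- under the conditions `γ + 2ξη < 1` and `ξ − η ≤ 1` (with `S ≠ 0`),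
every power flow solution `v` with `|v_i − 1| < r̄·|v_i|` for all `i` lies in the
closed polydisc `{v : |v_i − (1 − η_i)| ≤ r̲·ξ_i ∀ i}`. -/
theorem no_pf_solution_outside_polydisc {n : ℕ} (hn : 1 ≤ n)
    (Z : Matrix (Fin n) (Fin n) ℂ) (hZ : IsUnit Z.det)
    (S : Fin n → ℂ) (hS : S ≠ 0)
    (h1 : gammaMax Z S + 2 * xiMax Z S * etaMax Z S < 1)
    (h2 : xiMax Z S - etaMax Z S ≤ 1) :
    ∀ v : Fin n → ℂ, (∀ i, v i ≠ 0) → pfMap Z S v = v →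
      (∀ i, ‖v i - 1‖ < rHigh Z S * ‖v i‖) →
      ∀ i, ‖v i - (1 - etaI Z S i)‖ ≤ rLow Z S * xiI Z S i := by
  intro v hv hfix hball
  haveI : Nonempty (Fin n) := ⟨⟨0, hn⟩⟩
  -- sup facts
  have hξle : ∀ i, xiI Z S i ≤ xiMax Z S := fun i => by
    rw [xiMax]
    exact le_ciSup (f := fun k => xiI Z S k) (Set.Finite.bddAbove (Set.finite_range _)) i
  have hηle : ∀ i, ‖etaI Z S i‖ ≤ etaMax Z S := fun i => by
    rw [etaMax]
    exact le_ciSup (f := fun k => ‖etaI Z S k‖)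
      (Set.Finite.bddAbove (Set.finite_range _)) i
  have hγle : ∀ i, gammaI Z S i ≤ gammaMax Z S := fun i => by
    rw [gammaMax]
    exact le_ciSup (f := fun k => gammaI Z S k) (Set.Finite.bddAbove (Set.finite_range _)) i
  have hξi0 : ∀ i, 0 ≤ xiI Z S i :=
    fun i => Finset.sum_nonneg (fun j _ => norm_nonneg _)
  have hη0 : 0 ≤ etaMax Z S :=
    le_trans (norm_nonneg _) (hηle (Classical.arbitrary (Fin n)))
  -- xiMax > 0
  obtain ⟨j0, hj0⟩ : ∃ j, S j ≠ 0 := by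
    by_contra h; push_neg at h; exact hS (funext h)
  obtain ⟨i1, hi1⟩ : ∃ i, Z i j0 ≠ 0 := by
    by_contra h; push_neg at h
    exact (hZ.ne_zero) (Matrix.det_eq_zero_of_column_eq_zero j0 h)
  have hξ0 : 0 < xiMax Z S := by
    refine lt_of_lt_of_le ?_ (hξle i1)
    rw [xiI]
    exact lt_of_lt_of_le (norm_pos_iff.mpr (mul_ne_zero hi1 hj0))
      (Finset.single_le_sum (f := fun j => ‖Z i1 j * S j‖)
        (fun j _ => norm_nonneg _) (Finset.mem_univ j0))
  -- gamma bound via argmax of xi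
  obtain ⟨jm, hjm⟩ := Finite.exists_max (xiI Z S)
  have hξeq : xiMax Z S = xiI Z S jm := le_antisymm (ciSup_le hjm) (hξle jm)
  have hγb : 1 - gammaMax Z S ≤ (1 - xiMax Z S)^2 + (etaMax Z S)^2 + 2*(etaMax Z S) := by
    have hg := hγle jm
    rw [gammaI, ← hξeq] at hg
    have hre : -(‖etaI Z S jm‖) ≤ (etaI Z S jm).re :=
      (abs_le.mp (Complex.abs_re_le_norm _)).1
    have hNη := hηle jm
    have hN0 := norm_nonneg (etaI Z S jm)
    nlinarith
  -- max of av
  set av : Fin n → ℝ := fun j => ‖1 - (v j)⁻¹‖ with havdef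
  obtain ⟨i₀, hi₀⟩ := Finite.exists_max av
  set a := av i₀ with hadef
  have ha0 : 0 ≤ a := norm_nonneg _
  -- av j * |v j| = |v j - 1|
  have havmul : ∀ j, av j * ‖v j‖ = ‖v j - 1‖ := by
    intro j
    rw [havdef]
    simp only
    rw [← norm_mul]
    congr 1
    rw [sub_mul, one_mul, inv_mul_cancel₀ (hv j)]
  have haR : a < rHigh Z S := by
    have hb := hball i₀
    have hvpos : 0 < ‖v i₀‖ := norm_pos_iff.mpr (hv i₀)
    have h6 := havmul i₀
    rw [← h6] at hb
    exact lt_of_mul_lt_mul_right hb hvpos.le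
  -- c bound
  have hci : ∀ i, v i - (1 - etaI Z S i)
      = ∑ j, Z i j * (starRingEnd ℂ) (S j) * (1 - ((starRingEnd ℂ) (v j))⁻¹) := by
    intro i
    have hv_i := congrFun hfix i
    simp only [pfMap] at hv_i
    calc v i - (1 - etaI Z S i)
        = etaI Z S i - ∑ j, Z i j * (starRingEnd ℂ) (S j) / (starRingEnd ℂ) (v j) := by
          rw [← hv_i]; ring
      _ = ∑ j, (Z i j * (starRingEnd ℂ) (S j)
            - Z i j * (starRingEnd ℂ) (S j) / (starRingEnd ℂ) (v j)) := by
          rw [etaI, Finset.sum_sub_distrib]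
      _ = _ := Finset.sum_congr rfl (fun j _ => by ring)
  have hcb : ∀ i, ‖v i - (1 - etaI Z S i)‖ ≤ xiI Z S i * a := by
    intro i
    rw [hci i]
    refine le_trans (norm_sum_le _ _) ?_
    rw [xiI, Finset.sum_mul]
    refine Finset.sum_le_sum (fun j _ => ?_)
    rw [norm_mul, norm_mul, Complex.norm_conj, ← norm_mul]
    have h5 : ‖1 - ((starRingEnd ℂ) (v j))⁻¹‖ = av j := by
      rw [← map_inv₀, ← map_one (starRingEnd ℂ), ← map_sub, Complex.norm_conj, havdef]
    rw [h5]
    exact mul_le_mul_of_nonneg_left (hi₀ j) (norm_nonneg _)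
  -- main case split
  intro i
  by_cases hale : a ≤ rLow Z S
  · refine le_trans (hcb i) ?_
    rw [mul_comm (rLow Z S) (xiI Z S i)]
    exact mul_le_mul_of_nonneg_left hale (hξi0 i)
  · exfalso
    push_neg at hale
    -- global G(a^2) < 0
    have hB2ξη : 2 * xiMax Z S * etaMax Z S < 1 - gammaMax Z S := by linarith
    have hD0 : 0 ≤ (1 - gammaMax Z S)^2 - 4*(xiMax Z S)^2*(etaMax Z S)^2 := by
      nlinarith [mul_nonneg (mul_nonneg (by norm_num : (0:ℝ) ≤ 2) hξ0.le) hη0]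
    have hsD2 : (Real.sqrt ((1 - gammaMax Z S)^2 - 4*(xiMax Z S)^2*(etaMax Z S)^2))^2
        = (1 - gammaMax Z S)^2 - 4*(xiMax Z S)^2*(etaMax Z S)^2 := Real.sq_sqrt hD0
    have hsD0 : 0 ≤ Real.sqrt ((1 - gammaMax Z S)^2 - 4*(xiMax Z S)^2*(etaMax Z S)^2) :=
      Real.sqrt_nonneg _
    have hB0 : 0 < 1 - gammaMax Z S := by
      nlinarith [mul_nonneg (mul_nonneg (by norm_num : (0:ℝ) ≤ 2) hξ0.le) hη0]
    have hsDB : Real.sqrt ((1 - gammaMax Z S)^2 - 4*(xiMax Z S)^2*(etaMax Z S)^2)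
        ≤ 1 - gammaMax Z S := by
      nlinarith [hsD2, hsD0, mul_nonneg (mul_nonneg (by norm_num : (0:ℝ) ≤ 4)
        (sq_nonneg (xiMax Z S))) (sq_nonneg (etaMax Z S))]
    have harg : 0 ≤ (1 - gammaMax Z S -
        Real.sqrt ((1 - gammaMax Z S)^2 - 4*(xiMax Z S)^2*(etaMax Z S)^2)) /
        (2*(xiMax Z S)^2) := by
      apply div_nonneg (by linarith) (by positivity)
    have hrL2 : 2*(xiMax Z S)^2*(rLow Z S)^2 = 1 - gammaMax Z S -
        Real.sqrt ((1 - gammaMax Z S)^2 - 4*(xiMax Z S)^2*(etaMax Z S)^2) := by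
      rw [rLow, Real.sq_sqrt harg]
      field_simp
    have hrH2 : 2*(xiMax Z S)^2*(rHigh Z S)^2 = 1 - gammaMax Z S +
        Real.sqrt ((1 - gammaMax Z S)^2 - 4*(xiMax Z S)^2*(etaMax Z S)^2) := by
      rw [rHigh, Real.sq_sqrt (by positivity)]
      field_simp
    have hrL0 : 0 ≤ rLow Z S := Real.sqrt_nonneg _
    have haL : (rLow Z S)^2 < a^2 := by nlinarith
    have haH : a^2 < (rHigh Z S)^2 := by nlinarith [Real.sqrt_nonneg ((1 - gammaMax Z S +
      Real.sqrt ((1 - gammaMax Z S)^2 - 4*(xiMax Z S)^2*(etaMax Z S)^2)) / (2*(xiMax Z S)^2))]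
    have h2ξ2 : (0:ℝ) < 2*(xiMax Z S)^2 := by positivity
    have e2 : 0 < 2*(xiMax Z S)^2*a^2 - (1 - gammaMax Z S -
        Real.sqrt ((1 - gammaMax Z S)^2 - 4*(xiMax Z S)^2*(etaMax Z S)^2)) := by
      nlinarith [mul_pos h2ξ2 (sub_pos.2 haL)]
    have e3 : 0 < (1 - gammaMax Z S +
        Real.sqrt ((1 - gammaMax Z S)^2 - 4*(xiMax Z S)^2*(etaMax Z S)^2))
        - 2*(xiMax Z S)^2*a^2 := by
      nlinarith [mul_pos h2ξ2 (sub_pos.2 haH)]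
    have hGglob : (xiMax Z S)^2*(a^2)^2 - (1 - gammaMax Z S)*a^2 + (etaMax Z S)^2 < 0 := by
      by_contra hcon
      push_neg at hcon
      nlinarith [mul_pos e2 e3, hsD2,
        mul_nonneg (mul_nonneg (by norm_num : (0:ℝ) ≤ 4) (sq_nonneg (xiMax Z S))) hcon]
    -- per-index at i₀
    have hGi : (xiI Z S i₀)^2*(a^2)^2
        - (1 - (2*(xiI Z S i₀ + (etaI Z S i₀).re) - (xiI Z S i₀)^2 - (‖etaI Z S i₀‖)^2))*a^2
        + (‖etaI Z S i₀‖)^2 < 0 := by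
      have hγi := hγle i₀
      rw [gammaI] at hγi
      have hξi := hξle i₀
      have hηi := hηle i₀
      have hN0 := norm_nonneg (etaI Z S i₀)
      have hξi0' := hξi0 i₀
      nlinarith [sq_nonneg a, sq_nonneg (a^2), mul_le_mul hξi hξi hξi0' hξ0.le,
        mul_le_mul hηi hηi hN0 hη0, hGglob]
    have hmm : xiI Z S i₀ * (1 - a^2) ≤ 1 := by
      rcases le_or_gt (1 - a^2) 0 with hc | hc
      · exact le_trans (mul_nonpos_of_nonneg_of_nonpos (hξi0 i₀) hc) zero_le_one
      · have hglobal : xiMax Z S * (1 - a^2) ≤ 1 :=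
          lemA (xiMax Z S) (etaMax Z S) (gammaMax Z S) (a^2) hξ0.le (sq_nonneg a) hGglob hγb h2
        refine le_trans (mul_le_mul_of_nonneg_right (hξle i₀) hc.le) hglobal
    -- the equation at i₀
    have heq : ‖1 - v i₀‖ = a * ‖1 - (1 - v i₀)‖ := by
      have h6 : (1:ℂ) - (1 - v i₀) = v i₀ := by ring
      rw [h6, norm_sub_rev, ← havmul i₀]
    have hsb : ‖etaI Z S i₀ - (1 - v i₀)‖ ≤ xiI Z S i₀ * a := by
      have : etaI Z S i₀ - (1 - v i₀) = v i₀ - (1 - etaI Z S i₀) := by ring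
      rw [this]
      exact hcb i₀
    exact core (etaI Z S i₀) (1 - v i₀) a (xiI Z S i₀) (hξi0 i₀) ha0 heq hsb hmm hGi
end

section
/- If 4ξ < 1, then γ + 2ξη < 1 and ξ − η ≤ 1. Consequently, the solvability set certified by the condition of Wang et al., S_w = {S ∈ ℂ^n : 4ξ < 1}, is contained in the solvability set certified by the proposed condition, S_p = {S ∈ ℂ^n : γ + 2ξη < 1 and ξ − η ≤ 1}. -/
open Complex

/-- `4ξ < 1` implies `γ + 2ξη < 1` and `ξ − η ≤ 1`; consequently the
solvability set of Wang et al. is contained in the proposed solvability set. -/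
theorem wang_condition_implies_proposed {n : ℕ} (hn : 1 ≤ n)
    (Z : Matrix (Fin n) (Fin n) ℂ) (hZ : IsUnit Z.det) :
    (∀ S : Fin n → ℂ, 4 * xiMax Z S < 1 →
      gammaMax Z S + 2 * xiMax Z S * etaMax Z S < 1 ∧ xiMax Z S - etaMax Z S ≤ 1) ∧
    {S : Fin n → ℂ | 4 * xiMax Z S < 1} ⊆
      {S : Fin n → ℂ |
        gammaMax Z S + 2 * xiMax Z S * etaMax Z S < 1 ∧ xiMax Z S - etaMax Z S ≤ 1} := by
  have key : ∀ S : Fin n → ℂ, 4 * xiMax Z S < 1 →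
      gammaMax Z S + 2 * xiMax Z S * etaMax Z S < 1 ∧ xiMax Z S - etaMax Z S ≤ 1 := by
    intro S h4
    have hne : Nonempty (Fin n) := ⟨⟨0, hn⟩⟩
    have hxi_nonneg : ∀ i, 0 ≤ xiI Z S i := fun i =>
      Finset.sum_nonneg fun j _ => norm_nonneg _
    have habs_le : ∀ i, ‖etaI Z S i‖ ≤ xiI Z S i := by
      intro i
      refine le_trans (norm_sum_le _ _) (le_of_eq ?_)
      unfold xiI
      refine Finset.sum_congr rfl fun j _ => ?_
      simp [norm_mul, Complex.norm_conj]
    have hbx : BddAbove (Set.range fun i => xiI Z S i) := Set.Finite.bddAbove (Set.finite_range _)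
    have hbe : BddAbove (Set.range fun i => ‖etaI Z S i‖) :=
      Set.Finite.bddAbove (Set.finite_range _)
    have hxiI_le : ∀ i, xiI Z S i ≤ xiMax Z S := fun i => le_ciSup hbx i
    have hetaI_le : ∀ i, ‖etaI Z S i‖ ≤ etaMax Z S := fun i => le_ciSup hbe i
    have hxi0 : 0 ≤ xiMax Z S := le_trans (hxi_nonneg ⟨0, hn⟩) (hxiI_le ⟨0, hn⟩)
    have heta0 : 0 ≤ etaMax Z S :=
      le_trans (norm_nonneg _) (hetaI_le ⟨0, hn⟩)
    have heta_le_xi : etaMax Z S ≤ xiMax Z S :=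
      ciSup_le fun i => le_trans (habs_le i) (hxiI_le i)
    have hxi_lt : xiMax Z S < 1 / 4 := by linarith
    have hgamma : gammaMax Z S ≤
        2 * xiMax Z S + 2 * etaMax Z S - (xiMax Z S) ^ 2 - (etaMax Z S) ^ 2 := by
      refine ciSup_le fun i => ?_
      unfold gammaI
      have hre : (etaI Z S i).re ≤ ‖etaI Z S i‖ := Complex.re_le_norm _
      have h1 := hxiI_le i
      have h2 := hetaI_le i
      have h3 := hxi_nonneg i
      have h4 := norm_nonneg (etaI Z S i)
      nlinarith [hxi_lt, heta_le_xi]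
    constructor
    · nlinarith [sq_nonneg (xiMax Z S - etaMax Z S)]
    · linarith
  exact ⟨key, fun S hS => key S hS⟩
end

section
/- Let c ∈ ℂ^n, let r ∈ ℝ^n with r_i > 0 for all i, and let D := {z ∈ ℂ^n : |z_i − c_i| < r_i for all i} be the open polydisc with center c and radii r. Suppose f : ℂ^n → ℂ^n is holomorphic on D (complex-differentiable in the several-variables sense), continuous on the closure of D, maps the closure of D into D, and the closure of the image f(D) is contained in D. Then f has exactly one fixed point in D. -/
open Complex
open Metric Set

noncomputable def moeb (a z : ℂ) : ℂ := (a - z) / (1 - (starRingEnd ℂ) a * z)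

lemma normSq_key (a z : ℂ) :
    Complex.normSq (1 - (starRingEnd ℂ) a * z) - Complex.normSq (a - z)
      = (1 - Complex.normSq a) * (1 - Complex.normSq z) := by
  simp [Complex.normSq_apply, Complex.sub_re, Complex.sub_im, Complex.mul_re, Complex.mul_im,
    Complex.conj_re, Complex.conj_im, Complex.one_re, Complex.one_im]
  ring

lemma normSq_lt_one {a : ℂ} (ha : ‖a‖ < 1) : Complex.normSq a < 1 := by
  have ha' : ‖a‖ < 1 := by exact ha
  rw [Complex.normSq_eq_norm_sq]
  nlinarith [norm_nonneg a]

lemma denom_normSq_pos {a z : ℂ} (ha : ‖a‖ < 1) (hz : ‖z‖ < 1) :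
    Complex.normSq (a - z) < Complex.normSq (1 - (starRingEnd ℂ) a * z) := by
  nlinarith [normSq_key a z, normSq_lt_one ha, normSq_lt_one hz, Complex.normSq_nonneg (a - z)]

lemma denom_ne_zero {a z : ℂ} (ha : ‖a‖ < 1) (hz : ‖z‖ < 1) :
    (1 - (starRingEnd ℂ) a * z) ≠ 0 := by
  intro h
  have h2 := denom_normSq_pos ha hz
  rw [h, Complex.normSq_zero] at h2
  exact absurd h2 (Complex.normSq_nonneg _).not_gt

lemma moeb_mem_ball {a z : ℂ} (ha : ‖a‖ < 1) (hz : ‖z‖ < 1) : ‖moeb a z‖ < 1 := by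
  rw [moeb, norm_div, div_lt_one (norm_pos_iff.2 (denom_ne_zero ha hz))]
  have h2 := denom_normSq_pos ha hz
  rw [← Complex.sq_norm, ← Complex.sq_norm] at h2
  exact lt_of_pow_lt_pow_left₀ 2 (norm_nonneg _) h2

lemma moeb_zero_right (a : ℂ) : moeb a 0 = a := by simp [moeb]

lemma moeb_self (a : ℂ) : moeb a a = 0 := by simp [moeb]

lemma moeb_moeb {a z : ℂ} (ha : ‖a‖ < 1) (hz : ‖z‖ < 1) : moeb a (moeb a z) = z := by
  have h1 : (1 - (starRingEnd ℂ) a * z) ≠ 0 := denom_ne_zero ha hz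
  have h2 : (1 - (starRingEnd ℂ) a * a) ≠ 0 := denom_ne_zero ha ha
  have key : 1 - (starRingEnd ℂ) a * ((a - z)/(1 - (starRingEnd ℂ) a * z))
      = (1 - (starRingEnd ℂ) a * a) / (1 - (starRingEnd ℂ) a * z) := by
    field_simp; ring
  have key2 : a - (a - z)/(1 - (starRingEnd ℂ) a * z)
      = (z * (1 - (starRingEnd ℂ) a * a)) / (1 - (starRingEnd ℂ) a * z) := by
    rw [eq_div_iff h1, sub_mul, div_mul_cancel₀ _ h1]; ring
  rw [moeb, moeb, key, key2, div_div_div_cancel_right₀]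
  · exact mul_div_cancel_right₀ z h2
  · exact h1

lemma moeb_differentiableAt {a z : ℂ} (h : (1 - (starRingEnd ℂ) a * z) ≠ 0) :
    DifferentiableAt ℂ (moeb a) z :=
  DifferentiableAt.div ((differentiableAt_const a).sub differentiableAt_id)
    ((differentiableAt_const (1:ℂ)).sub ((differentiableAt_id).const_mul _)) h

lemma moeb_diffOn {a : ℂ} (ha : ‖a‖ < 1) : DifferentiableOn ℂ (moeb a) (ball 0 1) :=
  fun x hx =>
    (moeb_differentiableAt (denom_ne_zero ha (mem_ball_zero_iff.1 hx))).differentiableWithinAt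

lemma moeb_mapsTo {a : ℂ} (ha : ‖a‖ < 1) : MapsTo (moeb a) (ball 0 1) (ball 0 1) :=
  fun x hx => mem_ball_zero_iff.2 (moeb_mem_ball ha (mem_ball_zero_iff.1 hx))

lemma schwarz_pick {g : ℂ → ℂ} (hd : DifferentiableOn ℂ g (ball 0 1))
    (hm : MapsTo g (ball 0 1) (ball 0 1)) {z w : ℂ} (hz : z ∈ ball 0 1) (hw : w ∈ ball 0 1) :
    ‖moeb (g w) (g z)‖ ≤ ‖moeb w z‖ := by
  have hwn : ‖w‖ < 1 := mem_ball_zero_iff.1 hw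
  have hzn : ‖z‖ < 1 := mem_ball_zero_iff.1 hz
  have hgw : ‖g w‖ < 1 := mem_ball_zero_iff.1 (hm hw)
  set h : ℂ → ℂ := (moeb (g w)) ∘ g ∘ (moeb w) with hh
  have hmaps : MapsTo h (ball 0 1) (ball 0 1) :=
    (moeb_mapsTo hgw).comp (hm.comp (moeb_mapsTo hwn))
  have hdh : DifferentiableOn ℂ h (ball 0 1) :=
    (moeb_diffOn hgw).comp (hd.comp (moeb_diffOn hwn) (moeb_mapsTo hwn))
      (hm.comp (moeb_mapsTo hwn))
  have h0 : h 0 = 0 := by simp [hh, Function.comp, moeb_zero_right, moeb_self]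
  have hball : ‖moeb w z‖ < 1 := by
    exact moeb_mem_ball hwn hzn
  have hle := Complex.norm_le_norm_of_mapsTo_ball hdh (hmaps.mono_right ball_subset_closedBall) h0 hball
  have hcomp : h (moeb w z) = moeb (g w) (g z) := by
    simp [hh, Function.comp, moeb_moeb hwn hzn]
  rw [hcomp] at hle
  exact hle

lemma aux_denom_ineq {s : ℝ} (hs0 : 0 < s) (hs1 : s < 1) {t : ℂ} (hq : Complex.normSq t ≤ 1) :
    (1 + s^2) * ‖1 - t‖ ≤ 2 * ‖(1 : ℂ) - (s:ℂ)^2 * t‖ := by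
  have hx2 : t.re^2 ≤ Complex.normSq t := by
    rw [Complex.normSq_apply]; nlinarith [sq_nonneg t.im]
  have hx : -1 ≤ t.re := by nlinarith
  have key : 4 * Complex.normSq (1 - (s:ℂ)^2 * t) - (1+s^2)^2 * Complex.normSq (1 - t)
      = (1 - s^2) * ((1 + 3*s^2)*(1 - Complex.normSq t) + 2*(1 - s^2)*(1 + t.re)) := by
    rw [show ((s:ℂ))^2 = ((s^2 : ℝ) : ℂ) by push_cast; ring]
    simp only [Complex.normSq_apply, Complex.sub_re, Complex.sub_im, Complex.mul_re,
      Complex.mul_im, Complex.ofReal_re, Complex.ofReal_im, Complex.one_re, Complex.one_im]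
    ring
  have e1 : Complex.normSq (1 - t) = ‖1 - t‖^2 := by
    rw [Complex.normSq_eq_norm_sq]
  have e2 : Complex.normSq (1 - (s:ℂ)^2 * t) = ‖(1:ℂ) - (s:ℂ)^2 * t‖^2 := by
    rw [Complex.normSq_eq_norm_sq]
  have hA : 0 ≤ (1 + s^2) * ‖1 - t‖ := by positivity
  have hB : 0 ≤ 2 * ‖(1 : ℂ) - (s:ℂ)^2 * t‖ := by positivity
  have hsq : ((1 + s^2) * ‖1 - t‖)^2 ≤ (2 * ‖(1 : ℂ) - (s:ℂ)^2 * t‖)^2 := by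
    rw [e1, e2] at key
    nlinarith [key,
      mul_nonneg (mul_nonneg (by nlinarith : (0:ℝ) ≤ 1 - s^2)
        (by nlinarith : (0:ℝ) ≤ 1 + 3*s^2)) (by nlinarith : (0:ℝ) ≤ 1 - Complex.normSq t),
      mul_nonneg (mul_nonneg (by nlinarith : (0:ℝ) ≤ 1 - s^2)
        (by nlinarith : (0:ℝ) ≤ 1 - s^2)) (by nlinarith : (0:ℝ) ≤ 1 + t.re)]
  exact (pow_le_pow_iff_left₀ hA hB two_ne_zero).1 hsq

lemma moeb_scale {s : ℝ} (hs0 : 0 < s) (hs1 : s < 1) {u v : ℂ} (hu : ‖u‖ < 1) (hv : ‖v‖ < 1) :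
    ‖moeb ((s:ℂ) * u) ((s:ℂ) * v)‖ ≤ (2*s/(1+s^2)) * ‖moeb u v‖ := by
  set t := (starRingEnd ℂ) u * v with ht
  have htn : ‖t‖ < 1 := by
    rw [ht, norm_mul, RCLike.norm_conj]
    nlinarith [norm_nonneg u, norm_nonneg v]
  have htq : Complex.normSq t ≤ 1 := (normSq_lt_one htn).le
  have hsu : ‖(s:ℂ) * u‖ < 1 := by
    rw [norm_mul, Complex.norm_real, Real.norm_eq_abs, abs_of_pos hs0]
    nlinarith [norm_nonneg u]
  have hsv : ‖(s:ℂ) * v‖ < 1 := by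
    rw [norm_mul, Complex.norm_real, Real.norm_eq_abs, abs_of_pos hs0]
    nlinarith [norm_nonneg v]
  have hde : 1 - (starRingEnd ℂ) ((s:ℂ) * u) * ((s:ℂ) * v) = 1 - (s:ℂ)^2 * t := by
    rw [ht, map_mul, Complex.conj_ofReal]; ring
  have hd2 : (0:ℝ) < ‖(1:ℂ) - (s:ℂ)^2 * t‖ := by
    rw [← hde]; exact norm_pos_iff.2 (denom_ne_zero hsu hsv)
  have hd1 : (0:ℝ) < ‖(1:ℂ) - t‖ := norm_pos_iff.2 (denom_ne_zero hu hv)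
  have hnum : (s:ℂ) * u - (s:ℂ) * v = (s:ℂ) * (u - v) := by ring
  have hmain := aux_denom_ineq hs0 hs1 htq
  rw [moeb, moeb, hde, hnum, norm_div, norm_div, norm_mul, Complex.norm_real,
    Real.norm_eq_abs, abs_of_pos hs0, div_mul_div_comm]
  rw [div_le_div_iff₀ hd2 (by positivity)]
  nlinarith [mul_le_mul_of_nonneg_left hmain (mul_nonneg hs0.le (norm_nonneg (u - v))),
    norm_nonneg (u - v), sq_nonneg s]

lemma norm_sub_le_two_mul_moeb {a b : ℂ} (ha : ‖a‖ < 1) (hb : ‖b‖ < 1) :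
    ‖a - b‖ ≤ 2 * ‖moeb a b‖ := by
  have hd : (1 - (starRingEnd ℂ) a * b) ≠ 0 := denom_ne_zero ha hb
  have heq : ‖a - b‖ = ‖moeb a b‖ * ‖1 - (starRingEnd ℂ) a * b‖ := by
    rw [moeb, norm_div, div_mul_cancel₀ _ (norm_ne_zero_iff.2 hd)]
  have hle : ‖1 - (starRingEnd ℂ) a * b‖ ≤ 2 := by
    calc ‖1 - (starRingEnd ℂ) a * b‖ ≤ ‖(1:ℂ)‖ + ‖(starRingEnd ℂ) a * b‖ := norm_sub_le _ _
    _ ≤ 2 := by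
        rw [norm_one, norm_mul, RCLike.norm_conj]
        nlinarith [norm_nonneg a, norm_nonneg b]
  rw [heq]
  nlinarith [norm_nonneg (moeb a b)]

lemma moeb_eq_zero_iff {a b : ℂ} (ha : ‖a‖ < 1) (hb : ‖b‖ < 1) (h : moeb a b = 0) : a = b := by
  rw [moeb, div_eq_zero_iff] at h
  rcases h with h | h
  · exact sub_eq_zero.1 h
  · exact absurd h (denom_ne_zero ha hb)


/-- a function holomorphic in an open polydisc `D`, continuous on its
closure, mapping the closure into `D`, and whose image of `D` has closure contained in
`D`, has exactly one fixed point in `D`. -/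
theorem unique_fixed_point_in_polydisc {n : ℕ}
    (c : Fin n → ℂ) (r : Fin n → ℝ) (hr : ∀ i, 0 < r i)
    (f : (Fin n → ℂ) → (Fin n → ℂ))
    (D : Set (Fin n → ℂ)) (hD : D = {z | ∀ i, ‖z i - c i‖ < r i})
    (hf : DifferentiableOn ℂ f D)
    (hfc : ContinuousOn f (closure D))
    (hmap : Set.MapsTo f (closure D) D)
    (himg : closure (f '' D) ⊆ D) :
    ∃! w, w ∈ D ∧ f w = w := by

  -- basic structure of D
  have hD' : D = Set.pi Set.univ (fun i => ball (c i) (r i)) := by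
    rw [hD]; ext z
    simp [Set.mem_pi, mem_ball, Complex.dist_eq]
  have hDopen : IsOpen D := by
    rw [hD']; exact isOpen_set_pi Set.finite_univ (fun i _ => isOpen_ball)
  have hclosureD : closure D = Set.pi Set.univ (fun i => closedBall (c i) (r i)) := by
    have he : (fun i => closure (ball (c i) (r i))) = fun i => closedBall (c i) (r i) :=
      funext fun i => closure_ball _ (hr i).ne'
    rw [hD', closure_pi_set, he]
  have hDcompactcl : IsCompact (closure D) := by
    rw [hclosureD]
    exact isCompact_univ_pi (fun i => isCompact_closedBall _ _)
  have hcD : c ∈ D := by rw [hD]; intro i; simpa using hr i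
  -- the compact image K and the contraction factor s
  set K : Set (Fin n → ℂ) := f '' (closure D) with hK
  have hKcompact : IsCompact K := hDcompactcl.image_of_continuousOn hfc
  have hKne : K.Nonempty := ⟨f c, c, subset_closure hcD, rfl⟩
  set G : (Fin n → ℂ) → ℝ := fun y => ‖fun i => (y i - c i) / (r i : ℂ)‖ with hG
  have hGcont : Continuous G := by
    apply Continuous.norm
    exact continuous_pi fun i => ((continuous_apply i).sub continuous_const).div_const _
  obtain ⟨y₀, hy₀K, hy₀max⟩ := hKcompact.exists_isMaxOn hKne hGcont.continuousOn
  have hKD : K ⊆ D := fun y ⟨x, hx, hxy⟩ => hxy ▸ hmap hx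
  have hGltD : ∀ y ∈ D, G y < 1 := by
    intro y hy
    rw [hD] at hy
    rw [hG]
    rw [pi_norm_lt_iff one_pos]
    intro i
    rw [norm_div, Complex.norm_real, Real.norm_eq_abs, abs_of_pos (hr i),
      div_lt_one (hr i)]
    exact hy i
  set s : ℝ := (G y₀ + 1) / 2 with hs
  have hG0 : 0 ≤ G y₀ := norm_nonneg _
  have hs0 : 0 < s := by rw [hs]; linarith
  have hs1 : s < 1 := by
    have := hGltD y₀ (hKD hy₀K)
    rw [hs]; linarith
  have hsK : ∀ y ∈ K, ∀ i, ‖y i - c i‖ < s * r i := by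
    intro y hy i
    have h1 : G y ≤ G y₀ := hy₀max hy
    have h2 : ‖(y i - c i) / (r i : ℂ)‖ ≤ G y := by
      rw [hG]; exact norm_le_pi_norm (fun j => (y j - c j) / (r j : ℂ)) i
    have h3 : ‖(y i - c i) / (r i : ℂ)‖ = ‖y i - c i‖ / r i := by
      rw [norm_div, Complex.norm_real, Real.norm_eq_abs, abs_of_pos (hr i)]
    have h4 : ‖y i - c i‖ / r i < s := by
      rw [← h3]; rw [hs]; linarith
    calc ‖y i - c i‖ = (‖y i - c i‖ / r i) * r i := by
          rw [div_mul_cancel₀ _ (hr i).ne']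
    _ < s * r i := by exact mul_lt_mul_of_pos_right h4 (hr i)
  -- normalized coordinates and the contraction constant
  set ζ : Fin n → (Fin n → ℂ) → ℂ := fun j z => (z j - c j) / (r j : ℂ) with hζ
  have hrne : ∀ j, ((r j : ℂ)) ≠ 0 := fun j => Complex.ofReal_ne_zero.2 (hr j).ne'
  have hsne : ((s : ℂ)) ≠ 0 := Complex.ofReal_ne_zero.2 hs0.ne'
  have hζD : ∀ z ∈ D, ∀ j, ‖ζ j z‖ < 1 := by
    intro z hz j
    rw [hD] at hz
    simp only [hζ]
    rw [norm_div, Complex.norm_real, Real.norm_eq_abs, abs_of_pos (hr j), div_lt_one (hr j)]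
    exact hz j
  set L : ℝ := 2*s/(1+s^2) with hL
  have hL0 : 0 < L := by rw [hL]; exact div_pos (by linarith) (by positivity)
  have hL1 : L < 1 := by
    rw [hL, div_lt_one (by positivity)]; nlinarith [sq_nonneg (1 - s)]
  have hsmall : ∀ z ∈ D, ∀ i, ‖(f z i - c i) / ((s:ℂ) * (r i : ℂ))‖ < 1 := by
    intro z hz i
    have hfz : f z ∈ K := ⟨z, subset_closure hz, rfl⟩
    rw [norm_div, norm_mul, Complex.norm_real, Complex.norm_real, Real.norm_eq_abs,
      Real.norm_eq_abs, abs_of_pos hs0, abs_of_pos (hr i), div_lt_one (mul_pos hs0 (hr i))]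
    exact hsK _ hfz i
  have hsplit : ∀ (y : Fin n → ℂ) (i : Fin n),
      ζ i y = (s:ℂ) * ((y i - c i) / ((s:ℂ) * (r i : ℂ))) := by
    intro y i
    simp only [hζ]
    field_simp
  have key : ∀ z ∈ D, ∀ w ∈ D, ∀ m : ℝ, 0 < m → m < 1 →
      (∀ j, ‖moeb (ζ j z) (ζ j w)‖ ≤ m) →
      ∀ i, ‖moeb (ζ i (f z)) (ζ i (f w))‖ ≤ L * m := by
    intro z hz w hw m hm0 hm1 hb i
    set μ : Fin n → ℂ := fun j => moeb (ζ j z) (ζ j w) / (m:ℂ) with hμ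
    have hμle : ∀ j, ‖μ j‖ ≤ 1 := by
      intro j
      simp only [hμ]
      rw [norm_div, Complex.norm_real, Real.norm_eq_abs, abs_of_pos hm0, div_le_one hm0]
      exact hb j
    set Φ : ℂ → (Fin n → ℂ) := fun lam j => c j + (r j : ℂ) * moeb (ζ j z) (μ j * lam) with hΦ
    have hμlam : ∀ (lam : ℂ), ‖lam‖ < 1 → ∀ j, ‖μ j * lam‖ < 1 := by
      intro lam hlam j
      rw [norm_mul]
      calc ‖μ j‖ * ‖lam‖ ≤ 1 * ‖lam‖ := mul_le_mul_of_nonneg_right (hμle j) (norm_nonneg _)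
      _ = ‖lam‖ := one_mul _
      _ < 1 := hlam
    have hΦD : ∀ lam ∈ ball (0:ℂ) 1, Φ lam ∈ D := by
      intro lam hlam
      rw [hD]
      intro j
      have h1 : ‖moeb (ζ j z) (μ j * lam)‖ < 1 :=
        moeb_mem_ball (hζD z hz j) (hμlam lam (mem_ball_zero_iff.1 hlam) j)
      simp only [hΦ]
      rw [show c j + (r j : ℂ) * moeb (ζ j z) (μ j * lam) - c j
          = (r j : ℂ) * moeb (ζ j z) (μ j * lam) by ring]
      rw [norm_mul, Complex.norm_real, Real.norm_eq_abs, abs_of_pos (hr j)]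
      calc r j * ‖moeb (ζ j z) (μ j * lam)‖ < r j * 1 := by
            refine mul_lt_mul_of_pos_left ?_ (hr j)
            exact h1
      _ = r j := mul_one _
    have hΦ0 : Φ 0 = z := by
      funext j
      simp only [hΦ, mul_zero, moeb_zero_right, hζ]
      rw [mul_comm, div_mul_cancel₀ _ (hrne j)]
      ring
    have hmballC : (m:ℂ) ∈ ball (0:ℂ) 1 := by
      rw [mem_ball_zero_iff, Complex.norm_real, Real.norm_eq_abs, abs_of_pos hm0]; exact hm1
    have hΦm : Φ (m:ℂ) = w := by
      funext j
      have h1 : μ j * (m:ℂ) = moeb (ζ j z) (ζ j w) := by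
        simp only [hμ]
        exact div_mul_cancel₀ _ (by exact_mod_cast hm0.ne')
      simp only [hΦ, h1]
      rw [moeb_moeb (hζD z hz j) (hζD w hw j)]
      simp only [hζ]
      rw [mul_comm, div_mul_cancel₀ _ (hrne j)]
      ring
    have hΦdiff : DifferentiableOn ℂ Φ (ball (0:ℂ) 1) := by
      apply differentiableOn_pi.2
      intro j
      have hmo : DifferentiableOn ℂ (fun lam => moeb (ζ j z) (μ j * lam)) (ball (0:ℂ) 1) := by
        intro lam hlam
        have hin : ‖μ j * lam‖ < 1 := hμlam lam (mem_ball_zero_iff.1 hlam) j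
        exact ((moeb_differentiableAt (denom_ne_zero (hζD z hz j) hin)).comp lam
          (differentiableAt_id.const_mul (μ j))).differentiableWithinAt
      simp only [hΦ]
      exact (hmo.const_mul _).const_add _
    set g : ℂ → ℂ := fun lam => (f (Φ lam) i - c i) / ((s:ℂ) * (r i : ℂ)) with hg
    have hgmaps : MapsTo g (ball 0 1) (ball 0 1) := by
      intro lam hlam
      rw [mem_ball_zero_iff]
      simp only [hg]
      exact hsmall _ (hΦD lam hlam) i
    have hgdiff : DifferentiableOn ℂ g (ball 0 1) := by
      have h1 : DifferentiableOn ℂ (f ∘ Φ) (ball 0 1) :=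
        hf.comp hΦdiff (fun lam hlam => hΦD lam hlam)
      have h2 : DifferentiableOn ℂ (fun lam => f (Φ lam) i) (ball 0 1) :=
        ((ContinuousLinearMap.proj i :
          ((Fin n) → ℂ) →L[ℂ] ℂ).differentiable).comp_differentiableOn h1
      simp only [hg]
      exact (h2.sub_const _).div_const _
    have hz0 : (0:ℂ) ∈ ball (0:ℂ) 1 := mem_ball_self one_pos
    have hsp := schwarz_pick hgdiff hgmaps hmballC hz0
    have hmnorm : ‖moeb 0 ((m:ℂ))‖ = m := by
      rw [moeb]
      simp only [map_zero, zero_mul, sub_zero, zero_sub, norm_div, norm_neg, norm_one]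
      rw [Complex.norm_real, Real.norm_eq_abs, abs_of_pos hm0, div_one]
    have hu : ‖g 0‖ < 1 := by
      simp only [hg, hΦ0]; exact hsmall z hz i
    have hv : ‖g (m:ℂ)‖ < 1 := by
      simp only [hg, hΦm]; exact hsmall w hw i
    have hgz : ζ i (f z) = (s:ℂ) * g 0 := by
      simp only [hg, hΦ0]; exact hsplit (f z) i
    have hgw : ζ i (f w) = (s:ℂ) * g (m:ℂ) := by
      simp only [hg, hΦm]; exact hsplit (f w) i
    rw [hgz, hgw]
    calc ‖moeb ((s:ℂ) * g 0) ((s:ℂ) * g (m:ℂ))‖ ≤ (2*s/(1+s^2)) * ‖moeb (g 0) (g (m:ℂ))‖ :=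
          moeb_scale hs0 hs1 hu hv
    _ ≤ L * m := by
        rw [hL]
        refine mul_le_mul_of_nonneg_left ?_ (by positivity)
        exact hsp.trans hmnorm.le
  -- the iterates of f starting at c
  set seq : ℕ → (Fin n → ℂ) := fun k => f^[k] c with hseq
  have hseqsucc : ∀ k, seq (k+1) = f (seq k) := fun k => by
    simp only [hseq, Function.iterate_succ_apply']
  have hseqD : ∀ k, seq k ∈ D := by
    intro k
    induction k with
    | zero => simpa [hseq] using hcD
    | succ k ih =>
      rw [hseqsucc k]
      exact hmap (subset_closure ih)
  have hstep : ∀ k, ∀ j, ‖moeb (ζ j (seq k)) (ζ j (seq (k+1)))‖ ≤ L^k * s := by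
    intro k
    induction k with
    | zero =>
      intro j
      have h0 : ζ j (seq 0) = 0 := by
        simp only [hseq, Function.iterate_zero_apply, hζ]
        simp
      rw [pow_zero, one_mul, h0]
      have hfcK : f c ∈ K := ⟨c, subset_closure hcD, rfl⟩
      have hb : ‖f c j - c j‖ < s * r j := hsK _ hfcK j
      have hmz : ‖moeb 0 (ζ j (seq 1))‖ = ‖ζ j (seq 1)‖ := by
        rw [moeb]; simp
      rw [hmz]
      have hseq1 : seq 1 = f c := by simp [hseq]
      rw [hseq1]
      simp only [hζ]
      rw [norm_div, Complex.norm_real, Real.norm_eq_abs, abs_of_pos (hr j),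
        div_le_iff₀ (hr j)]
      exact hb.le
    | succ k ih =>
      have hm0 : 0 < L^k * s := mul_pos (pow_pos hL0 k) hs0
      have hm1 : L^k * s < 1 := by
        have h1 : L^k ≤ 1 := pow_le_one₀ hL0.le hL1.le
        nlinarith
      have hkey := key (seq k) (hseqD k) (seq (k+1)) (hseqD (k+1)) (L^k * s) hm0 hm1 ih
      intro j
      have h2 := hkey j
      rw [← hseqsucc k, ← hseqsucc (k+1)] at h2
      calc ‖moeb (ζ j (seq (k+1))) (ζ j (seq (k+1+1)))‖ ≤ L * (L^k * s) := h2
      _ = L^(k+1) * s := by ring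
  have hdist : ∀ k, dist (seq k) (seq (k+1)) ≤ (2 * s * ‖r‖) * L^k := by
    intro k
    have hLknn : (0:ℝ) ≤ L^k := (pow_pos hL0 k).le
    have hpos : 0 ≤ (2 * s * ‖r‖) * L^k := by positivity
    rw [dist_pi_le_iff hpos]
    intro i
    have ha : ‖ζ i (seq k)‖ < 1 := hζD _ (hseqD k) i
    have hb' : ‖ζ i (seq (k+1))‖ < 1 := hζD _ (hseqD (k+1)) i
    have h1 := norm_sub_le_two_mul_moeb ha hb'
    have h2 : ζ i (seq k) - ζ i (seq (k+1)) = (seq k i - seq (k+1) i) / (r i : ℂ) := by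
      simp only [hζ]; ring
    have h3 : dist (seq k i) (seq (k+1) i) = ‖seq k i - seq (k+1) i‖ :=
      Complex.dist_eq _ _
    have h4 : ‖seq k i - seq (k+1) i‖ = ‖ζ i (seq k) - ζ i (seq (k+1))‖ * r i := by
      rw [h2, norm_div, Complex.norm_real, Real.norm_eq_abs, abs_of_pos (hr i),
        div_mul_cancel₀ _ (hr i).ne']
    have h5 : r i ≤ ‖r‖ := by
      calc r i ≤ |r i| := le_abs_self _
      _ ≤ ‖r‖ := by rw [← Real.norm_eq_abs]; exact norm_le_pi_norm r i
    rw [h3, h4]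
    calc ‖ζ i (seq k) - ζ i (seq (k+1))‖ * r i ≤ (2 * (L^k * s)) * ‖r‖ := by
          apply mul_le_mul _ h5 (hr i).le (by positivity)
          calc ‖ζ i (seq k) - ζ i (seq (k+1))‖
              ≤ 2 * ‖moeb (ζ i (seq k)) (ζ i (seq (k+1)))‖ := h1
          _ ≤ 2 * (L^k * s) := by nlinarith [hstep k i]
    _ = (2 * s * ‖r‖) * L^k := by ring
  have hcauchy : CauchySeq seq :=
    cauchySeq_of_le_geometric L (2*s*‖r‖) hL1 (fun k => hdist k)
  obtain ⟨w, hwlim⟩ := cauchySeq_tendsto_of_complete hcauchy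
  have hsublim : Filter.Tendsto (fun k => seq (k+1)) Filter.atTop (nhds w) :=
    hwlim.comp (Filter.tendsto_add_atTop_nat 1)
  have hwD : w ∈ D := by
    apply himg
    apply mem_closure_of_tendsto hsublim
    filter_upwards with k
    exact ⟨seq k, hseqD k, (hseqsucc k).symm⟩
  have hcont : ContinuousAt f w :=
    (hf.continuousOn).continuousAt (hDopen.mem_nhds hwD)
  have hfw : f w = w := by
    have h1 : Filter.Tendsto (fun k => f (seq k)) Filter.atTop (nhds (f w)) :=
      hcont.tendsto.comp hwlim
    have h2 : (fun k => f (seq k)) = fun k => seq (k+1) := funext fun k => (hseqsucc k).symm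
    rw [h2] at h1
    exact tendsto_nhds_unique h1 hsublim
  refine ⟨w, ⟨hwD, hfw⟩, ?_⟩
  rintro y ⟨hyD, hfy⟩
  have hyK : y ∈ K := ⟨y, subset_closure hyD, hfy⟩
  have hwK : w ∈ K := ⟨w, subset_closure hwD, hfw⟩
  have hnormed : ∀ v ∈ K, ∀ j, ‖(v j - c j)/((s:ℂ)*(r j : ℂ))‖ < 1 := by
    intro v hv j
    rw [norm_div, norm_mul, Complex.norm_real, Complex.norm_real, Real.norm_eq_abs,
      Real.norm_eq_abs, abs_of_pos hs0, abs_of_pos (hr j), div_lt_one (mul_pos hs0 (hr j))]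
    exact hsK _ hv j
  have hbase : ∀ j, ‖moeb (ζ j y) (ζ j w)‖ ≤ L := by
    intro j
    have hy' := hnormed y hyK j
    have hw' := hnormed w hwK j
    have hms := moeb_scale hs0 hs1 hy' hw'
    rw [← hsplit y j, ← hsplit w j] at hms
    calc ‖moeb (ζ j y) (ζ j w)‖
        ≤ (2*s/(1+s^2)) * ‖moeb ((y j - c j)/((s:ℂ)*(r j : ℂ))) ((w j - c j)/((s:ℂ)*(r j : ℂ)))‖ := hms
    _ ≤ (2*s/(1+s^2)) * 1 := by
        refine mul_le_mul_of_nonneg_left ?_ (by positivity)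
        exact (moeb_mem_ball hy' hw').le
    _ = L := by rw [hL, mul_one]
  have hiter : ∀ k, ∀ j, ‖moeb (ζ j y) (ζ j w)‖ ≤ L^k * L := by
    intro k
    induction k with
    | zero => intro j; rw [pow_zero, one_mul]; exact hbase j
    | succ k ih =>
      have hm0 : 0 < L^k * L := mul_pos (pow_pos hL0 k) hL0
      have hm1 : L^k * L < 1 := by
        have h1 : L^k ≤ 1 := pow_le_one₀ hL0.le hL1.le
        nlinarith
      have h2 := key y hyD w hwD (L^k * L) hm0 hm1 ih
      intro j
      have h3 := h2 j
      rw [hfy, hfw] at h3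
      calc ‖moeb (ζ j y) (ζ j w)‖ ≤ L * (L^k * L) := h3
      _ = L^(k+1) * L := by ring
  have hzero : ∀ j, ζ j y = ζ j w := by
    intro j
    have htend : Filter.Tendsto (fun k => L^k * L) Filter.atTop (nhds 0) := by
      have h0 := tendsto_pow_atTop_nhds_zero_of_lt_one hL0.le hL1
      simpa using h0.mul_const L
    have h1 : ‖moeb (ζ j y) (ζ j w)‖ ≤ 0 :=
      ge_of_tendsto' htend (fun k => hiter k j)
    have h2 : moeb (ζ j y) (ζ j w) = 0 :=
      norm_eq_zero.1 (le_antisymm h1 (norm_nonneg _))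
    exact moeb_eq_zero_iff (hζD y hyD j) (hζD w hwD j) h2
  funext j
  have h3 := hzero j
  simp only [hζ] at h3
  have h4 : y j - c j = w j - c j := by
    rw [div_eq_div_iff (hrne j) (hrne j)] at h3
    exact mul_right_cancel₀ (hrne j) h3
  exact sub_left_inj.mp h4
end
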